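/- arXiv:0902.2150 — 2 statements merged into one kernel-verified Lean document; each statement's English description precedes it below -/
import Mathlib

section
/- Let H be a connected graph with girth at least 7 whose square G = H² is not complete, and let F be the subgraph of G formed by the forced edges. Then every vertex of G not incident to any forced edge belongs to exactly one maximal clique of G. -/
open SimpleGraph

variable {V : Type*}

/-- The square of a graph: `x` and `y` are adjacent iff `1 ≤ d_H(x,y) ≤ 2`. -/
def graphSq (H : SimpleGraph V) : SimpleGraph V where
  Adj x y := x ≠ y ∧ (H.Adj x y ∨ ∃ z, H.Adj x z ∧ H.Adj z y)
  symm := ⟨by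
    rintro x y ⟨hxy, h | ⟨z, h1, h2⟩⟩
    · exact ⟨hxy.symm, Or.inl h.symm⟩
    · exact ⟨hxy.symm, Or.inr ⟨z, h2.symm, h1.symm⟩⟩⟩
  loopless := ⟨fun x h => h.1 rfl⟩

/-- `Q` is a maximal clique of `G`. -/
def IsMaxClique (G : SimpleGraph V) (Q : Set V) : Prop :=
  G.IsClique Q ∧ ∀ R : Set V, G.IsClique R → Q ⊆ R → R = Q

/-- `xy` is a forced edge of `G`: it lies in at least two distinct maximal cliques. -/
def Forced (G : SimpleGraph V) (x y : V) : Prop :=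
  G.Adj x y ∧ ∃ Q₁ Q₂ : Set V, Q₁ ≠ Q₂ ∧ IsMaxClique G Q₁ ∧ IsMaxClique G Q₂ ∧
    x ∈ Q₁ ∧ y ∈ Q₁ ∧ x ∈ Q₂ ∧ y ∈ Q₂

/-- The subgraph of `G` consisting of all forced edges. -/
def forcedSubgraph (G : SimpleGraph V) : SimpleGraph V where
  Adj := Forced G
  symm := ⟨by
    rintro x y ⟨hadj, Q₁, Q₂, hne, h1, h2, hx1, hy1, hx2, hy2⟩
    exact ⟨hadj.symm, Q₁, Q₂, hne, h1, h2, hy1, hx1, hy2, hx2⟩⟩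
  loopless := ⟨fun x h => h.1.ne rfl⟩

/-- `H` contains no cycle of length 3 and no cycle of length 5. -/
def C3C5Free (H : SimpleGraph V) : Prop :=
  ∀ (v : V) (w : H.Walk v v), w.IsCycle → w.length ≠ 3 ∧ w.length ≠ 5

/-- The set `S` induces a star in `F`: at least two vertices, a center adjacent to
all others, and the non-center vertices pairwise non-adjacent. -/
def IsStarOn (F : SimpleGraph V) (S : Set V) : Prop :=
  S.Nontrivial ∧ ∃ c ∈ S, (∀ x ∈ S, x ≠ c → F.Adj c x) ∧
    ∀ x ∈ S, ∀ y ∈ S, x ≠ c → y ≠ c → x ≠ y → ¬ F.Adj x y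

section helpers

variable {H : SimpleGraph V}

private lemma cycleBound (hg : 7 ≤ H.girth) {v : V} (w : H.Walk v v) (hw : w.IsCycle) :
    7 ≤ w.length := by
  have h1 : H.egirth ≤ (w.length : ℕ∞) := le_egirth.1 le_rfl v w hw
  have h2 : (7 : ℕ) ≤ H.egirth.toNat := hg
  have h3 : H.egirth.toNat ≤ w.length := ENat.toNat_le_of_le_coe h1
  omega

private lemma noC3 (hg : 7 ≤ H.girth) {a b c : V} (h1 : H.Adj a b) (h2 : H.Adj b c)
    (h3 : H.Adj c a) : False := by
  have hab := h1.ne; have hbc := h2.ne; have hca := h3.ne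
  let w : H.Walk a a := .cons h1 (.cons h2 (.cons h3 .nil))
  have hw : w.IsCycle := by
    refine ⟨⟨?_, by simp [w]⟩, ?_⟩
    · rw [Walk.isTrail_def]
      simp [w, Sym2.eq, Sym2.rel_iff']
      tauto
    · simp [w]; tauto
  have := cycleBound hg w hw
  simp [w, Walk.length_cons] at this

private lemma noC4 (hg : 7 ≤ H.girth) {a b c d : V} (h1 : H.Adj a b) (h2 : H.Adj b c)
    (h3 : H.Adj c d) (h4 : H.Adj d a) (hac : a ≠ c) (hbd : b ≠ d) : False := by
  have hab := h1.ne; have hbc := h2.ne; have hcd := h3.ne; have hda := h4.ne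
  let w : H.Walk a a := .cons h1 (.cons h2 (.cons h3 (.cons h4 .nil)))
  have hw : w.IsCycle := by
    refine ⟨⟨?_, by simp [w]⟩, ?_⟩
    · rw [Walk.isTrail_def]
      simp [w, Sym2.eq, Sym2.rel_iff']
      tauto
    · simp [w]; tauto
  have := cycleBound hg w hw
  simp [w, Walk.length_cons] at this

private lemma noC5 (hg : 7 ≤ H.girth) {a b c d e : V} (h1 : H.Adj a b) (h2 : H.Adj b c)
    (h3 : H.Adj c d) (h4 : H.Adj d e) (h5 : H.Adj e a)
    (hac : a ≠ c) (had : a ≠ d) (hbd : b ≠ d) (hbe : b ≠ e) (hce : c ≠ e) : False := by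
  have hab := h1.ne; have hbc := h2.ne; have hcd := h3.ne; have hde := h4.ne
  have hea := h5.ne
  let w : H.Walk a a := .cons h1 (.cons h2 (.cons h3 (.cons h4 (.cons h5 .nil))))
  have hw : w.IsCycle := by
    refine ⟨⟨?_, by simp [w]⟩, ?_⟩
    · rw [Walk.isTrail_def]
      simp [w, Sym2.eq, Sym2.rel_iff']
      tauto
    · simp [w]; tauto
  have := cycleBound hg w hw
  simp [w, Walk.length_cons] at this

private lemma noC6 (hg : 7 ≤ H.girth) {a b c d e f : V} (h1 : H.Adj a b) (h2 : H.Adj b c)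
    (h3 : H.Adj c d) (h4 : H.Adj d e) (h5 : H.Adj e f) (h6 : H.Adj f a)
    (hac : a ≠ c) (had : a ≠ d) (hae : a ≠ e) (hbd : b ≠ d) (hbe : b ≠ e)
    (hbf : b ≠ f) (hce : c ≠ e) (hcf : c ≠ f) (hdf : d ≠ f) : False := by
  have hab := h1.ne; have hbc := h2.ne; have hcd := h3.ne; have hde := h4.ne
  have hef := h5.ne; have hfa := h6.ne
  let w : H.Walk a a := .cons h1 (.cons h2 (.cons h3 (.cons h4 (.cons h5 (.cons h6 .nil)))))
  have hw : w.IsCycle := by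
    refine ⟨⟨?_, by simp [w]⟩, ?_⟩
    · rw [Walk.isTrail_def]
      simp [w, Sym2.eq, Sym2.rel_iff']
      tauto
    · simp [w]; tauto
  have := cycleBound hg w hw
  simp [w, Walk.length_cons] at this

/-- The closed neighborhood of `c` in `H`. -/
private def Ncl (H : SimpleGraph V) (c : V) : Set V := insert c (H.neighborSet c)

private lemma mem_Ncl {c x : V} : x ∈ Ncl H c ↔ x = c ∨ H.Adj c x := by
  simp [Ncl, SimpleGraph.mem_neighborSet]

private lemma ncl_clique (c : V) : (graphSq H).IsClique (Ncl H c) := by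
  intro a ha b hb hab
  rw [mem_Ncl] at ha hb
  rcases ha with rfl | ha
  · rcases hb with rfl | hb
    · exact absurd rfl hab
    · exact ⟨hab, Or.inl hb⟩
  · rcases hb with rfl | hb
    · exact ⟨hab, Or.inl ha.symm⟩
    · exact ⟨hab, Or.inr ⟨c, ha.symm, hb⟩⟩

private lemma hub_unique (hg : 7 ≤ H.girth) {x y c c' : V} (hxy : x ≠ y)
    (hnadj : ¬ H.Adj x y) (hxc : x ∈ Ncl H c) (hyc : y ∈ Ncl H c)
    (hxc' : x ∈ Ncl H c') (hyc' : y ∈ Ncl H c') : c = c' := by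
  rw [mem_Ncl] at hxc hyc hxc' hyc'
  rcases hxc with rfl | hcx
  · rcases hyc with rfl | hcy
    · exact absurd rfl hxy
    · exact absurd hcy hnadj
  rcases hyc with rfl | hcy
  · exact absurd hcx.symm hnadj
  rcases hxc' with rfl | hcx'
  · rcases hyc' with rfl | hcy'
    · exact absurd rfl hxy
    · exact absurd hcy' hnadj
  rcases hyc' with rfl | hcy'
  · exact absurd hcx'.symm hnadj
  by_contra hcc
  exact noC4 hg hcx.symm hcy hcy'.symm hcx' hxy hcc

private lemma triangle_hub (hg : 7 ≤ H.girth) {x y z : V}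
    (hxy : (graphSq H).Adj x y) (hyz : (graphSq H).Adj y z) (hxz : (graphSq H).Adj x z) :
    ∃ c, x ∈ Ncl H c ∧ y ∈ Ncl H c ∧ z ∈ Ncl H c := by
  obtain ⟨nxy, pxy⟩ := hxy
  obtain ⟨nyz, pyz⟩ := hyz
  obtain ⟨nxz, pxz⟩ := hxz
  by_cases axy : H.Adj x y
  · by_cases ayz : H.Adj y z
    · exact ⟨y, mem_Ncl.2 (Or.inr axy.symm), mem_Ncl.2 (Or.inl rfl), mem_Ncl.2 (Or.inr ayz)⟩
    · by_cases axz : H.Adj x z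
      · exact ⟨x, mem_Ncl.2 (Or.inl rfl), mem_Ncl.2 (Or.inr axy), mem_Ncl.2 (Or.inr axz)⟩
      · -- only edge xy
        obtain ⟨m, hxm, hmz⟩ := pxz.resolve_left axz
        obtain ⟨n, hyn, hnz⟩ := pyz.resolve_left ayz
        by_cases hmn : m = n
        · subst hmn
          exact absurd (noC3 hg axy hyn hxm.symm) id
        · exact absurd (noC5 hg axy hyn hnz hmz.symm hxm.symm
            (by rintro rfl; exact axz hnz) nxz nyz
            (by rintro rfl; exact ayz hmz) (Ne.symm hmn)) id
  · by_cases ayz : H.Adj y z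
    · by_cases axz : H.Adj x z
      · exact ⟨z, mem_Ncl.2 (Or.inr axz.symm), mem_Ncl.2 (Or.inr ayz.symm), mem_Ncl.2 (Or.inl rfl)⟩
      · -- only edge yz
        obtain ⟨m, hxm, hmy⟩ := pxy.resolve_left axy
        obtain ⟨p, hxp, hpz⟩ := pxz.resolve_left axz
        by_cases hmp : m = p
        · subst hmp
          exact absurd (noC3 hg ayz hpz.symm hmy) id
        · exact absurd (noC5 hg ayz hpz.symm hxp.symm hxm hmy
            (by rintro rfl; exact axy hxp) (Ne.symm nxy) (Ne.symm nxz)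
            (by rintro rfl; exact axz hxm) (Ne.symm hmp)) id
    · by_cases axz : H.Adj x z
      · -- only edge xz
        obtain ⟨m, hxm, hmy⟩ := pxy.resolve_left axy
        obtain ⟨n, hyn, hnz⟩ := pyz.resolve_left ayz
        by_cases hmn : m = n
        · subst hmn
          exact absurd (noC3 hg axz hnz.symm hxm.symm) id
        · exact absurd (noC5 hg axz hnz.symm hyn.symm hmy.symm hxm.symm
            (by rintro rfl; exact axy hyn.symm) nxy (Ne.symm nyz)
            (by rintro rfl; exact ayz hmy.symm) (fun h => hmn h.symm)) id
      · -- no edges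
        obtain ⟨m, hxm, hmy⟩ := pxy.resolve_left axy
        obtain ⟨n, hyn, hnz⟩ := pyz.resolve_left ayz
        obtain ⟨p, hxp, hpz⟩ := pxz.resolve_left axz
        by_cases hmn : m = n
        · subst hmn
          exact ⟨m, mem_Ncl.2 (Or.inr hxm.symm), mem_Ncl.2 (Or.inr hmy), mem_Ncl.2 (Or.inr hnz)⟩
        · by_cases hmp : m = p
          · subst hmp
            exact ⟨m, mem_Ncl.2 (Or.inr hxm.symm), mem_Ncl.2 (Or.inr hmy), mem_Ncl.2 (Or.inr hpz)⟩
          · by_cases hnp : n = p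
            · subst hnp
              exact ⟨n, mem_Ncl.2 (Or.inr hxp.symm), mem_Ncl.2 (Or.inr hyn.symm),
                mem_Ncl.2 (Or.inr hnz)⟩
            · exact absurd (noC6 hg hxm hmy hyn hnz hpz.symm hxp.symm
                nxy (by rintro rfl; exact axy hyn.symm) nxz hmn
                (by rintro rfl; exact ayz hmy.symm) hmp nyz
                (by rintro rfl; exact axy hxp) hnp) id

private lemma clique_sub_ncl (hg : 7 ≤ H.girth) {Q : Set V} (hQ : (graphSq H).IsClique Q)
    {u : V} (hu : u ∈ Q) : ∃ c, Q ⊆ Ncl H c := by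
  by_cases hex : ∃ x ∈ Q, ∃ y ∈ Q, x ≠ y ∧ ¬ H.Adj x y
  · obtain ⟨x, hx, y, hy, hxy, hnadj⟩ := hex
    have hadj : (graphSq H).Adj x y := hQ hx hy hxy
    obtain ⟨m, hxm, hmy⟩ := hadj.2.resolve_left hnadj
    refine ⟨m, fun w hw => ?_⟩
    by_cases hwx : w = x
    · exact hwx ▸ mem_Ncl.2 (Or.inr hxm.symm)
    by_cases hwy : w = y
    · exact hwy ▸ mem_Ncl.2 (Or.inr hmy)
    obtain ⟨c, hxc, hyc, hwc⟩ := triangle_hub hg (hQ hx hy hxy)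
      (hQ hy hw (Ne.symm hwy)) (hQ hx hw (Ne.symm hwx))
    have : c = m := hub_unique hg hxy hnadj hxc hyc
      (mem_Ncl.2 (Or.inr hxm.symm)) (mem_Ncl.2 (Or.inr hmy))
    exact this ▸ hwc
  · push_neg at hex
    refine ⟨u, fun w hw => ?_⟩
    by_cases hwu : w = u
    · exact hwu ▸ mem_Ncl.2 (Or.inl rfl)
    · exact mem_Ncl.2 (Or.inr (hex u hu w hw (Ne.symm hwu)))

private lemma exists_maxclique (G : SimpleGraph V) (Q : Set V) (hQ : G.IsClique Q) :
    ∃ M, Q ⊆ M ∧ IsMaxClique G M := by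
  obtain ⟨M, hQM, hM⟩ := zorn_subset_nonempty {R : Set V | G.IsClique R}
    (fun c hcS hchain _hne => by
      refine ⟨⋃₀ c, ?_, fun s hs => Set.subset_sUnion_of_mem hs⟩
      intro x hx y hy hxy
      obtain ⟨s, hs, hxs⟩ := hx
      obtain ⟨t, ht, hyt⟩ := hy
      rcases hchain.total hs ht with h | h
      · exact hcS ht (h hxs) hyt hxy
      · exact hcS hs hxs (h hyt) hxy) Q hQ
  exact ⟨M, hQM, hM.1, fun R hR hMR => (hM.2 hR hMR).antisymm hMR⟩

private lemma maxclique_eq_ncl (hg : 7 ≤ H.girth) {Q : Set V}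
    (hQ : IsMaxClique (graphSq H) Q) {u : V} (hu : u ∈ Q) : ∃ c, Q = Ncl H c := by
  obtain ⟨c, hsub⟩ := clique_sub_ncl hg hQ.1 hu
  exact ⟨c, (hQ.2 (Ncl H c) (ncl_clique c) hsub).symm⟩

end helpers

theorem stmt5 (H : SimpleGraph V)
    (hconn : H.Connected) (hgirth : 7 ≤ H.girth) (hnc : graphSq H ≠ ⊤)
    (u : V) (hu : u ∉ (forcedSubgraph (graphSq H)).support) :
    ∃! Q : Set V, IsMaxClique (graphSq H) Q ∧ u ∈ Q := by
  have hnf : ∀ w, ¬ Forced (graphSq H) u w := fun w hw =>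
    hu ((forcedSubgraph (graphSq H)).mem_support.2 ⟨w, hw⟩)
  have hsing : (graphSq H).IsClique {u} := Set.pairwise_singleton u _
  obtain ⟨M, hsubM, hMmax⟩ := exists_maxclique (graphSq H) {u} hsing
  have huM : u ∈ M := hsubM rfl
  refine ⟨M, ⟨hMmax, huM⟩, ?_⟩
  rintro Q ⟨hQmax, huQ⟩
  by_contra hne
  obtain ⟨c₁, rfl⟩ := maxclique_eq_ncl hgirth hQmax huQ
  obtain ⟨c₂, rfl⟩ := maxclique_eq_ncl hgirth hMmax huM
  rcases mem_Ncl.1 huQ with rfl | h1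
  · -- u = c₁
    rcases mem_Ncl.1 huM with rfl | h2
    · exact hne rfl
    · exact hnf c₂ ⟨⟨h2.ne', Or.inl h2.symm⟩, Ncl H u, Ncl H c₂, hne, hQmax, hMmax,
        mem_Ncl.2 (Or.inl rfl), mem_Ncl.2 (Or.inr h2.symm),
        mem_Ncl.2 (Or.inr h2), mem_Ncl.2 (Or.inl rfl)⟩
  · rcases mem_Ncl.1 huM with rfl | h2
    · -- u = c₂
      exact hnf c₁ ⟨⟨h1.ne', Or.inl h1.symm⟩, Ncl H c₁, Ncl H u, hne, hQmax, hMmax,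
        mem_Ncl.2 (Or.inr h1), mem_Ncl.2 (Or.inl rfl),
        mem_Ncl.2 (Or.inl rfl), mem_Ncl.2 (Or.inr h1.symm)⟩
    · obtain ⟨Q₃, hsub3, h3max⟩ := exists_maxclique (graphSq H) (Ncl H u) (ncl_clique u)
      have huin3 : u ∈ Q₃ := hsub3 (mem_Ncl.2 (Or.inl rfl))
      have hc1in3 : c₁ ∈ Q₃ := hsub3 (mem_Ncl.2 (Or.inr h1.symm))
      have hc2in3 : c₂ ∈ Q₃ := hsub3 (mem_Ncl.2 (Or.inr h2.symm))
      by_cases h31 : Q₃ = Ncl H c₁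
      · have h32 : Q₃ ≠ Ncl H c₂ := fun h => hne (h31.symm.trans h)
        exact hnf c₂ ⟨⟨h2.ne', Or.inl h2.symm⟩, Q₃, Ncl H c₂, h32, h3max, hMmax,
          huin3, hc2in3, mem_Ncl.2 (Or.inr h2), mem_Ncl.2 (Or.inl rfl)⟩
      · exact hnf c₁ ⟨⟨h1.ne', Or.inl h1.symm⟩, Q₃, Ncl H c₁, h31, h3max, hQmax,
          huin3, hc1in3, mem_Ncl.2 (Or.inr h1), mem_Ncl.2 (Or.inl rfl)⟩
end

section
/- Let H be a graph containing neither a 3-cycle nor a 5-cycle, and let G = H². Then for every vertex x and every vertex y adjacent to x in H, the neighborhood of y in H equals N_G(y) ∩ (N_G[x] \ N_H(x)). -/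
open SimpleGraph

variable {V : Type*}

private lemma tri3' {V : Type*} {H : SimpleGraph V} {a b c : V}
    (hab : H.Adj a b) (hbc : H.Adj b c) (hca : H.Adj c a) :
    ∃ w : H.Walk a a, w.IsCycle ∧ w.length = 3 := by
  refine ⟨.cons hab (.cons hbc (.cons hca .nil)), ?_, rfl⟩
  simp [Walk.isCycle_def, Walk.isTrail_def, List.Nodup, hab.ne, hbc.ne, hca.ne,
    hab.ne', hbc.ne', hca.ne', Sym2.eq, Sym2.rel_iff']

private lemma noTri' {V : Type*} {H : SimpleGraph V} (hfree : C3C5Free H) {a b c : V}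
    (hab : H.Adj a b) (hbc : H.Adj b c) (hca : H.Adj c a) : False := by
  obtain ⟨w, hw, hl⟩ := tri3' hab hbc hca
  exact (hfree a w hw).1 hl

private lemma cyc5' {V : Type*} {H : SimpleGraph V} {a b c d e : V}
    (hab : H.Adj a b) (hbc : H.Adj b c) (hcd : H.Adj c d)
    (hde : H.Adj d e) (hea : H.Adj e a)
    (hac : a ≠ c) (had : a ≠ d) (hbd : b ≠ d) (hbe : b ≠ e) (hce : c ≠ e) :
    ∃ w : H.Walk a a, w.IsCycle ∧ w.length = 5 := by
  refine ⟨.cons hab (.cons hbc (.cons hcd (.cons hde (.cons hea .nil)))), ?_, rfl⟩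
  simp [Walk.isCycle_def, Walk.isTrail_def, List.Nodup, hab.ne, hbc.ne, hcd.ne,
    hde.ne, hea.ne, hab.ne', hbc.ne', hcd.ne', hde.ne', hea.ne',
    hac, had, hbd, hbe, hce, hac.symm, had.symm, hbd.symm, hbe.symm, hce.symm,
    Sym2.eq, Sym2.rel_iff']

theorem stmt8 (H : SimpleGraph V) (hfree : C3C5Free H)
    (x y : V) (hxy : H.Adj x y) :
    H.neighborSet y =
      (graphSq H).neighborSet y ∩
        (insert x ((graphSq H).neighborSet x) \ H.neighborSet x) :=  by
  ext z
  simp only [Set.mem_inter_iff, Set.mem_diff, Set.mem_insert_iff, mem_neighborSet,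
    graphSq]
  constructor
  · intro hyz
    have hzy : z ≠ y := hyz.ne'
    have hxz : ¬ H.Adj x z := by
      intro hxz
      rcases eq_or_ne z x with rfl | hne
      · exact H.loopless.irrefl z hxz
      · exact noTri' hfree hxy hyz hxz.symm
    refine ⟨⟨hzy.symm, Or.inl hyz⟩, ?_, hxz⟩
    rcases eq_or_ne z x with rfl | hne
    · exact Or.inl rfl
    · exact Or.inr ⟨hne.symm, Or.inr ⟨y, hxy, hyz⟩⟩
  · rintro ⟨⟨hzy, hG⟩, hx, hxz⟩
    rcases hx with rfl | ⟨hxz', hG'⟩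
    · exact hxy.symm
    rcases hG' with h | ⟨w, hxw, hwz⟩
    · exact absurd h hxz
    rcases hG with h | ⟨u, hyu, huz⟩
    · exact h
    by_contra hnyz
    have hux : u ≠ x := by rintro rfl; exact hxz huz
    have hwy : w ≠ y := by rintro rfl; exact hnyz hwz
    rcases eq_or_ne u w with rfl | huw
    · exact noTri' hfree hxy hyu hxw.symm
    · obtain ⟨c5, hc5, hl⟩ := cyc5' hxy hyu huz hwz.symm hxw.symm
        hux.symm hxz' hzy hwy.symm huw
      exact (hfree x c5 hc5).2 hl
end
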